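/- Let f be a real homogeneous polynomial of degree d ≥ 2 in n variables and K ⊆ ℝ^n a proper convex cone. Suppose f(a) > 0 for all a in the interior of K, and for a ∈ ℝ^n let Q_a = H_f(a) denote the Hessian matrix of f evaluated at a. Then the following are equivalent: (a) f is log-concave on K; (b) Q_a has exactly one positive eigenvalue (counted with multiplicity) for every a in the interior of K; (c) for every a in the interior of K, the quadratic form x ↦ xᵀQ_a x is negative semidefinite on the hyperplane {x : xᵀ(Q_a a) = 0}; (d) for every a in the interior of K, the matrix (aᵀQ_a a)·Q_a − (Q_a a)(Q_a a)ᵀ is negative semidefinite. -/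

import Mathlib

open Matrix

/-- The number of positive eigenvalues (with multiplicity) of a real symmetric matrix. -/
noncomputable def posEigCount {n : ℕ} (Q : Matrix (Fin n) (Fin n) ℝ) : ℕ :=
  @dite _ Q.IsHermitian (Classical.dec _)
    (fun h => (Finset.univ.filter fun i => 0 < h.eigenvalues i).card)
    (fun _ => 0)

/-- A proper convex cone: a closed convex cone that is pointed and solid. -/
def IsProperCone {n : ℕ} (K : Set (Fin n → ℝ)) : Prop :=
  Convex ℝ K ∧ (∀ c : ℝ, 0 ≤ c → ∀ x ∈ K, c • x ∈ K) ∧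
    IsClosed K ∧ K ∩ (-K) = {0} ∧ (interior K).Nonempty

/-- The dual cone of `K` with respect to the standard inner product. -/
def dualConeSet {n : ℕ} (K : Set (Fin n → ℝ)) : Set (Fin n → ℝ) :=
  {y | ∀ x ∈ K, 0 ≤ y ⬝ᵥ x}

/-- The quadratic form with symmetric matrix `Q` is `K`-Lorentzian: `Q` has exactly one
positive eigenvalue and `yᵀQx > 0` for all `x, y` in the interior of `K`. -/
def IsLorentzianMatrix {n : ℕ} (K : Set (Fin n → ℝ)) (Q : Matrix (Fin n) (Fin n) ℝ) : Prop :=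
  posEigCount Q = 1 ∧ ∀ x ∈ interior K, ∀ y ∈ interior K, 0 < y ⬝ᵥ (Q *ᵥ x)

/-- A nonzero `v ∈ K` spans an extreme ray of `K`. -/
def SpansExtremeRay {n : ℕ} (K : Set (Fin n → ℝ)) (v : Fin n → ℝ) : Prop :=
  v ∈ K ∧ v ≠ 0 ∧ ∀ x ∈ K, ∀ y ∈ K, v = x + y →
    (∃ c : ℝ, 0 ≤ c ∧ x = c • v) ∧ (∃ c : ℝ, 0 ≤ c ∧ y = c • v)

open MvPolynomial

/-- Directional derivative `D_a f = Σᵢ aᵢ ∂f/∂xᵢ` of a polynomial. -/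
noncomputable def dirDeriv {n : ℕ} (a : Fin n → ℝ) (f : MvPolynomial (Fin n) ℝ) :
    MvPolynomial (Fin n) ℝ :=
  ∑ i, a i • pderiv i f

/-- The gradient of a polynomial at a point. -/
noncomputable def polyGrad {n : ℕ} (f : MvPolynomial (Fin n) ℝ) (x : Fin n → ℝ) :
    Fin n → ℝ :=
  fun i => eval x (pderiv i f)

/-- The Hessian matrix of a polynomial at a point. -/
noncomputable def polyHess {n : ℕ} (f : MvPolynomial (Fin n) ℝ) (x : Fin n → ℝ) :
    Matrix (Fin n) (Fin n) ℝ :=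
  Matrix.of fun i j => eval x (pderiv i (pderiv j f))

/-- The Hessian of `log f` at `x`, namely `(f(x)·H_f(x) − ∇f(x)∇f(x)ᵀ)/f(x)²`. -/
noncomputable def logHess {n : ℕ} (f : MvPolynomial (Fin n) ℝ) (x : Fin n → ℝ) :
    Matrix (Fin n) (Fin n) ℝ :=
  ((eval x f) ^ 2)⁻¹ • ((eval x f) • polyHess f x -
    Matrix.vecMulVec (polyGrad f x) (polyGrad f x))

/-- `f` is log-concave at `x`: either `f = 0`, or `f(x) > 0` and the Hessian of `log f`
at `x` is negative semidefinite. -/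
def LogConcaveAt {n : ℕ} (f : MvPolynomial (Fin n) ℝ) (x : Fin n → ℝ) : Prop :=
  f = 0 ∨ (0 < eval x f ∧ (-(logHess f x)).PosSemidef)

/-- `f` is strictly log-concave at `x`: `f(x) > 0` and the Hessian of `log f` at `x` is
negative definite. -/
def StrictLogConcaveAt {n : ℕ} (f : MvPolynomial (Fin n) ℝ) (x : Fin n → ℝ) : Prop :=
  0 < eval x f ∧ (-(logHess f x)).PosDef


section Stmt9Helpers
open MvPolynomial Finsupp Matrix


lemma degree_univ {n : ℕ} (s : Fin n →₀ ℕ) : s.degree = ∑ j, s j :=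
  Finset.sum_subset (Finset.subset_univ _) (fun i _ hi => Finsupp.notMem_support_iff.mp hi)

lemma mon_euler {n : ℕ} (a : Fin n → ℝ) (s : Fin n →₀ ℕ) (c : ℝ) :
    ∑ j, a j * eval a (pderiv j (monomial s c)) =
      (∑ j, (s j : ℝ)) * eval a (monomial s c) := by
  rw [Finset.sum_mul]
  refine Finset.sum_congr rfl fun j _ => ?_
  rw [pderiv_monomial, eval_monomial, eval_monomial]
  rcases Nat.eq_zero_or_pos (s j) with h | h
  · simp [h]
  · obtain ⟨m, hm⟩ : ∃ m, s j = m + 1 := ⟨s j - 1, by omega⟩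
    set s' : Fin n →₀ ℕ := s - Finsupp.single j 1 with hs'
    have hprod : ∀ t : Fin n →₀ ℕ, t.prod (fun i e => a i ^ e) = ∏ i, a i ^ t i := by
      intro t
      exact Finsupp.prod_fintype _ _ (fun i => pow_zero _)
    rw [hprod, hprod]
    have hsub : ∀ i, i ≠ j → s' i = s i := by
      intro i hij
      simp [hs', Finsupp.sub_apply, Finsupp.single_apply, (Ne.symm hij)]
    have hsubj : s' j = m := by
      simp [hs', Finsupp.sub_apply, hm]
    have h1 : ∏ i, a i ^ s' i
        = a j ^ m * ∏ i ∈ Finset.univ.erase j, a i ^ s i := by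
      rw [← Finset.mul_prod_erase Finset.univ _ (Finset.mem_univ j), hsubj]
      congr 1
      exact Finset.prod_congr rfl fun i hi => by rw [hsub i (Finset.ne_of_mem_erase hi)]
    have h2 : ∏ i, a i ^ s i = a j ^ (m+1) * ∏ i ∈ Finset.univ.erase j, a i ^ s i := by
      rw [← Finset.mul_prod_erase Finset.univ _ (Finset.mem_univ j), hm]
    rw [h1, h2]
    push_cast [hm]
    ring



lemma euler {n d : ℕ} {f : MvPolynomial (Fin n) ℝ} (hf : f.IsHomogeneous d)
    (a : Fin n → ℝ) : ∑ j, a j * eval a (pderiv j f) = d * eval a f := by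
  calc ∑ j, a j * eval a (pderiv j f)
      = ∑ j, ∑ s ∈ f.support, a j * eval a (pderiv j (monomial s (coeff s f))) := by
        refine Finset.sum_congr rfl fun j _ => ?_
        conv_lhs => rw [← f.support_sum_monomial_coeff]
        rw [map_sum, map_sum, Finset.mul_sum]
    _ = ∑ s ∈ f.support, ∑ j, a j * eval a (pderiv j (monomial s (coeff s f))) :=
        Finset.sum_comm
    _ = ∑ s ∈ f.support, (d:ℝ) * eval a (monomial s (coeff s f)) := by
        refine Finset.sum_congr rfl fun s hs => ?_
        rw [mon_euler]
        congr 1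
        have hdeg : s.degree = d := by
          rw [Finsupp.degree_eq_weight_one]
          exact hf (MvPolynomial.mem_support_iff.mp hs)
        rw [← hdeg, degree_univ]
        push_cast
        rfl
    _ = d * eval a f := by
        rw [← Finset.mul_sum]
        congr 1
        conv_rhs => rw [← f.support_sum_monomial_coeff]
        rw [map_sum]

lemma pderiv_homog {n d : ℕ} {f : MvPolynomial (Fin n) ℝ} (hf : f.IsHomogeneous d)
    (i : Fin n) : (pderiv i f).IsHomogeneous (d - 1) := by
  conv_lhs => rw [← f.support_sum_monomial_coeff]
  rw [map_sum]
  refine IsHomogeneous.sum _ _ _ fun s hs => ?_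
  rw [pderiv_monomial]
  rcases Nat.eq_zero_or_pos (s i) with h | h
  · rw [h]; simp only [Nat.cast_zero, mul_zero, map_zero]
    exact isHomogeneous_zero _ _ _
  · refine isHomogeneous_monomial _ ?_
    set s' : Fin n →₀ ℕ := s - Finsupp.single i 1 with hs'def
    have hdeg : s.degree = d := by
      rw [Finsupp.degree_eq_weight_one]; exact hf (MvPolynomial.mem_support_iff.mp hs)
    rw [degree_univ] at hdeg ⊢
    have hsub : ∀ j, j ≠ i → s' j = s j := by
      intro j hij
      simp [hs'def, Finsupp.sub_apply, Finsupp.single_apply, (Ne.symm hij)]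
    have hsubi : s' i = s i - 1 := by
      simp [hs'def, Finsupp.sub_apply]
    have e1 : ∑ j, s' j = s' i + ∑ j ∈ Finset.univ.erase i, s' j :=
      (Finset.add_sum_erase _ _ (Finset.mem_univ i)).symm
    have e2 : ∑ j, s j = s i + ∑ j ∈ Finset.univ.erase i, s j :=
      (Finset.add_sum_erase _ _ (Finset.mem_univ i)).symm
    have e3 : ∑ j ∈ Finset.univ.erase i, s' j = ∑ j ∈ Finset.univ.erase i, s j :=
      Finset.sum_congr rfl fun j hj => hsub j (Finset.ne_of_mem_erase hj)
    omega

lemma pderiv_comm {n : ℕ} (i j : Fin n) (f : MvPolynomial (Fin n) ℝ) :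
    pderiv i (pderiv j f) = pderiv j (pderiv i f) := by
  induction f using MvPolynomial.induction_on' with
  | monomial s c =>
    rcases eq_or_ne i j with rfl | hij
    · rfl
    · rw [pderiv_monomial, pderiv_monomial, pderiv_monomial, pderiv_monomial]
      have h1 : s - Finsupp.single j 1 - Finsupp.single i 1
          = s - Finsupp.single i 1 - Finsupp.single j 1 := tsub_right_comm
      have h2 : (s - Finsupp.single j 1 : Fin n →₀ ℕ) i = s i := by
        simp [Finsupp.sub_apply, Finsupp.single_apply, (Ne.symm hij)]
      have h3 : (s - Finsupp.single i 1 : Fin n →₀ ℕ) j = s j := by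
        simp [Finsupp.sub_apply, Finsupp.single_apply, hij]
      rw [h1, h2, h3]
      congr 1
      ring
  | add p q hp hq => simp [map_add, hp, hq]

section Spectral
variable {n : ℕ} {Q : Matrix (Fin n) (Fin n) ℝ}



lemma expand_basis (hQ : Q.IsHermitian) (y : Fin n → ℝ) :
    y = ∑ i, ((hQ.eigenvectorBasis i : Fin n → ℝ) ⬝ᵥ y) • (hQ.eigenvectorBasis i : Fin n → ℝ) := by
  have h := hQ.eigenvectorBasis.sum_repr' (WithLp.toLp 2 y)
  have h2 : ∀ i, (inner ℝ (hQ.eigenvectorBasis i) (WithLp.toLp 2 y) : ℝ)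
      = (hQ.eigenvectorBasis i : Fin n → ℝ) ⬝ᵥ y := by
    intro i
    simp [PiLp.inner_apply, dotProduct, RCLike.inner_apply, mul_comm]
  simp only [h2] at h
  have h3 := congrArg (WithLp.ofLp (p := 2)) h
  simpa using h3.symm

lemma dot_sum {n : ℕ} (x : Fin n → ℝ) (w : Fin n → Fin n → ℝ) :
    x ⬝ᵥ (∑ i, w i) = ∑ i, x ⬝ᵥ w i := by
  simp only [dotProduct, Finset.sum_apply, Finset.mul_sum]
  exact Finset.sum_comm

lemma quad_expand (hQ : Q.IsHermitian) (x y : Fin n → ℝ) :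
    x ⬝ᵥ (Q *ᵥ y) = ∑ i, hQ.eigenvalues i * ((hQ.eigenvectorBasis i : Fin n → ℝ) ⬝ᵥ x)
      * ((hQ.eigenvectorBasis i : Fin n → ℝ) ⬝ᵥ y) := by
  conv_lhs => rw [expand_basis hQ y]
  have hlin : Q *ᵥ (∑ i, ((hQ.eigenvectorBasis i : Fin n → ℝ) ⬝ᵥ y) • (hQ.eigenvectorBasis i : Fin n → ℝ))
      = ∑ i, ((hQ.eigenvectorBasis i : Fin n → ℝ) ⬝ᵥ y) • (Q *ᵥ (hQ.eigenvectorBasis i : Fin n → ℝ)) := by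
    simp only [← Matrix.mulVecLin_apply, map_sum, _root_.map_smul]
  have hme : ∀ j, Q *ᵥ (hQ.eigenvectorBasis j : Fin n → ℝ)
      = hQ.eigenvalues j • (hQ.eigenvectorBasis j : Fin n → ℝ) := fun j =>
    hQ.mulVec_eigenvectorBasis j
  rw [hlin, dot_sum]
  refine Finset.sum_congr rfl fun i _ => ?_
  rw [hme i, dotProduct_smul, dotProduct_smul, smul_eq_mul, smul_eq_mul,
    dotProduct_comm x]
  ring





lemma basis_dot (hQ : Q.IsHermitian) (i j : Fin n) :
    (hQ.eigenvectorBasis i : Fin n → ℝ) ⬝ᵥ (hQ.eigenvectorBasis j : Fin n → ℝ)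
      = if i = j then 1 else 0 := by
  have h := hQ.eigenvectorBasis.orthonormal
  rw [orthonormal_iff_ite] at h
  have hij := h i j
  simpa [PiLp.inner_apply, RCLike.inner_apply, dotProduct, mul_comm] using hij

lemma posEigCount_eq (hQ : Q.IsHermitian) :
    posEigCount Q = (Finset.univ.filter fun i => 0 < hQ.eigenvalues i).card := by
  rw [posEigCount, dif_pos hQ]

lemma key_arith (lam b c : Fin n → ℝ) (k : Fin n) (hle : ∀ i, i ≠ k → lam i ≤ 0)
    (ht : 0 < ∑ i, lam i * b i * b i) (hx : ∑ i, lam i * c i * b i = 0) :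
    ∑ i, lam i * c i * c i ≤ 0 := by
  set s := Finset.univ.erase k with hsdef
  have hsplit : ∀ u : Fin n → ℝ, ∑ i, u i = u k + ∑ i ∈ s, u i := fun u =>
    (Finset.add_sum_erase _ u (Finset.mem_univ k)).symm
  set A := ∑ i ∈ s, lam i * b i * b i with hA
  set C := ∑ i ∈ s, lam i * c i * c i with hC
  set R := ∑ i ∈ s, lam i * c i * b i with hR
  have hlam : ∀ i ∈ s, lam i ≤ 0 := fun i hi => hle i (Finset.ne_of_mem_erase hi)
  have hA0 : A ≤ 0 := Finset.sum_nonpos fun i hi => by nlinarith [hlam i hi, mul_self_nonneg (b i)]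
  have hC0 : C ≤ 0 := Finset.sum_nonpos fun i hi => by nlinarith [hlam i hi, mul_self_nonneg (c i)]
  have hCS := Finset.sum_sq_le_sum_mul_sum_of_sq_eq_mul s
    (r := fun i => lam i * c i * b i)
    (f := fun i => -(lam i * b i * b i)) (g := fun i => -(lam i * c i * c i))
    (fun i hi => by nlinarith [hlam i hi, mul_self_nonneg (b i)])
    (fun i hi => by nlinarith [hlam i hi, mul_self_nonneg (c i)])
    (fun i hi => by ring)
  rw [Finset.sum_neg_distrib, Finset.sum_neg_distrib, ← hA, ← hC, ← hR, neg_mul_neg] at hCS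
  rw [hsplit] at ht hx ⊢
  rw [← hA] at ht
  rw [← hR] at hx
  rw [← hC]
  -- now: ht : 0 < lam k * b k * b k + A, hx : lam k * c k * b k + R = 0
  -- hCS : R ^ 2 ≤ A * C, goal : lam k * c k * c k + C ≤ 0
  have hpos : 0 < lam k * b k * b k := by linarith
  have h1 : (lam k * b k * b k) * (lam k * c k * c k) = (lam k * c k * b k)^2 := by ring
  have h2 : (lam k * c k * b k)^2 = R^2 := by
    have : lam k * c k * b k = -R := by linarith
    rw [this]; ring
  have h3 : A * C ≤ (lam k * b k * b k) * (-C) := by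
    have hnA : -A < lam k * b k * b k := by linarith
    have hnC : 0 ≤ -C := by linarith
    calc A * C = (-A) * (-C) := by ring
      _ ≤ (lam k * b k * b k) * (-C) := mul_le_mul_of_nonneg_right (le_of_lt hnA) hnC
  have h4 : (lam k * b k * b k) * (lam k * c k * c k) ≤ (lam k * b k * b k) * (-C) := by
    rw [h1, h2]; linarith
  have h5 : lam k * c k * c k ≤ -C := le_of_mul_le_mul_left h4 hpos
  linarith

lemma posEig_of_lorentz (hQ : Q.IsHermitian) {a : Fin n → ℝ} (ht : 0 < a ⬝ᵥ (Q *ᵥ a))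
    (hc : ∀ x, x ⬝ᵥ (Q *ᵥ a) = 0 → x ⬝ᵥ (Q *ᵥ x) ≤ 0) : posEigCount Q = 1 := by
  have hme : ∀ j, Q *ᵥ (hQ.eigenvectorBasis j : Fin n → ℝ)
      = hQ.eigenvalues j • (hQ.eigenvectorBasis j : Fin n → ℝ) := fun j =>
    hQ.mulVec_eigenvectorBasis j
  have hself : ∀ j, (hQ.eigenvectorBasis j : Fin n → ℝ) ⬝ᵥ
      (Q *ᵥ (hQ.eigenvectorBasis j : Fin n → ℝ)) = hQ.eigenvalues j := by
    intro j
    rw [hme j, dotProduct_smul, smul_eq_mul, basis_dot hQ j j]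
    simp
  have hex : ∃ k, 0 < hQ.eigenvalues k := by
    by_contra hnone
    push_neg at hnone
    have hle : a ⬝ᵥ (Q *ᵥ a) ≤ 0 := by
      rw [quad_expand hQ a a]
      apply Finset.sum_nonpos
      intro i _
      have h1 := hnone i
      have h2 := mul_self_nonneg ((hQ.eigenvectorBasis i : Fin n → ℝ) ⬝ᵥ a)
      nlinarith
    linarith
  obtain ⟨k, hk⟩ := hex
  have huniq : ∀ i j : Fin n, i ≠ j → 0 < hQ.eigenvalues i → 0 < hQ.eigenvalues j → False := by
    intro i j hij hi hj
    set vi : Fin n → ℝ := (hQ.eigenvectorBasis i : Fin n → ℝ) with hvidef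
    set vj : Fin n → ℝ := (hQ.eigenvectorBasis j : Fin n → ℝ) with hvjdef
    by_cases hvi : vi ⬝ᵥ (Q *ᵥ a) = 0
    · have := hc vi hvi
      rw [hself i] at this
      linarith
    · set α : ℝ := vj ⬝ᵥ (Q *ᵥ a) with hα
      set β : ℝ := -(vi ⬝ᵥ (Q *ᵥ a)) with hβ
      set x : Fin n → ℝ := α • vi + β • vj with hxdef
      have hxq : x ⬝ᵥ (Q *ᵥ a) = 0 := by
        rw [hxdef, add_dotProduct, smul_dotProduct, smul_dotProduct]
        simp only [smul_eq_mul, hβ]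
        ring
      have hQx : x ⬝ᵥ (Q *ᵥ x) = α^2 * hQ.eigenvalues i + β^2 * hQ.eigenvalues j := by
        have hmul : Q *ᵥ x = (α * hQ.eigenvalues i) • vi + (β * hQ.eigenvalues j) • vj := by
          rw [hxdef, mulVec_add, mulVec_smul, mulVec_smul, hme i, hme j, smul_smul, smul_smul]
        have d1 : vi ⬝ᵥ vi = 1 := by rw [hvidef, basis_dot hQ i i]; simp
        have d2 : vj ⬝ᵥ vj = 1 := by rw [hvjdef, basis_dot hQ j j]; simp
        have d3 : vi ⬝ᵥ vj = 0 := by rw [hvidef, hvjdef, basis_dot hQ i j]; simp [hij]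
        have d4 : vj ⬝ᵥ vi = 0 := by rw [hvidef, hvjdef, basis_dot hQ j i]; simp [Ne.symm hij]
        rw [hmul, hxdef]
        simp only [add_dotProduct, dotProduct_add, smul_dotProduct, dotProduct_smul,
          smul_eq_mul, d1, d2, d3, d4]
        ring
      have hβne : β ≠ 0 := by simpa [hβ] using hvi
      have hxpos : 0 < x ⬝ᵥ (Q *ᵥ x) := by
        rw [hQx]
        have h1 : 0 ≤ α^2 * hQ.eigenvalues i := by positivity
        have h2 : 0 < β^2 * hQ.eigenvalues j := by positivity
        linarith
      have := hc x hxq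
      linarith
  rw [posEigCount_eq hQ, Finset.card_eq_one]
  refine ⟨k, ?_⟩
  ext i
  simp only [Finset.mem_filter, Finset.mem_univ, true_and, Finset.mem_singleton]
  constructor
  · intro hi
    by_contra hik
    exact huniq i k hik hi hk
  · intro h
    rw [h]
    exact hk

lemma nsd_on_perp (hQ : Q.IsHermitian) {a : Fin n → ℝ} (ht : 0 < a ⬝ᵥ (Q *ᵥ a))
    (h1 : posEigCount Q = 1) :
    ∀ x, x ⬝ᵥ (Q *ᵥ a) = 0 → x ⬝ᵥ (Q *ᵥ x) ≤ 0 := by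
  rw [posEigCount_eq hQ, Finset.card_eq_one] at h1
  obtain ⟨k, hk⟩ := h1
  have hle : ∀ i, i ≠ k → hQ.eigenvalues i ≤ 0 := by
    intro i hik
    by_contra hpos
    have : i ∈ Finset.univ.filter fun i => 0 < hQ.eigenvalues i := by
      simp [lt_of_not_ge hpos]
    rw [hk] at this
    exact hik (by simpa using this)
  intro x hx
  rw [quad_expand hQ x a] at hx
  rw [quad_expand hQ a a] at ht
  rw [quad_expand hQ x x]
  exact key_arith _ _ _ k hle ht hx

end Spectral

section PolyPoint
variable {n d : ℕ} {f : MvPolynomial (Fin n) ℝ} {a : Fin n → ℝ}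


lemma star_vec (x : Fin n → ℝ) : star x = x := funext fun i => by
  simp [Pi.star_apply]

lemma herm_of_symm {M : Matrix (Fin n) (Fin n) ℝ} (h : ∀ i j, M i j = M j i) :
    M.IsHermitian := by
  unfold Matrix.IsHermitian
  ext i j
  rw [conjTranspose_apply, h j i]
  simp

lemma polyHess_herm (f : MvPolynomial (Fin n) ℝ) (a : Fin n → ℝ) :
    (polyHess f a).IsHermitian :=
  herm_of_symm fun i j => by simp [polyHess, pderiv_comm i j]

lemma vmv_mulVec (w v x : Fin n → ℝ) : vecMulVec w v *ᵥ x = (v ⬝ᵥ x) • w :=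
  funext fun i => by
    simp [vecMulVec_apply, mulVec, dotProduct, Finset.mul_sum, mul_assoc, mul_comm,
      mul_left_comm]

lemma dot_symm {Q : Matrix (Fin n) (Fin n) ℝ} (hQ : Q.IsHermitian) (x y : Fin n → ℝ) :
    x ⬝ᵥ (Q *ᵥ y) = y ⬝ᵥ (Q *ᵥ x) := by
  have hT : Qᵀ = Q := by
    have := hQ
    rwa [Matrix.IsHermitian, conjTranspose_eq_transpose_of_trivial] at this
  rw [Matrix.dotProduct_mulVec, ← Matrix.mulVec_transpose, hT, dotProduct_comm]

-- Euler consequences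
lemma grad_euler (hf : f.IsHomogeneous d) : a ⬝ᵥ polyGrad f a = d * eval a f :=
  euler hf a

lemma hess_mulVec (hd : 1 ≤ d) (hf : f.IsHomogeneous d) :
    polyHess f a *ᵥ a = ((d : ℝ) - 1) • polyGrad f a := by
  funext i
  have h1 : (polyHess f a *ᵥ a) i = ∑ j, a j * eval a (pderiv j (pderiv i f)) := by
    simp only [mulVec, dotProduct, polyHess, Matrix.of_apply]
    exact Finset.sum_congr rfl fun j _ => by rw [pderiv_comm i j, mul_comm]
  rw [h1, euler (pderiv_homog hf i) a]
  have : ((d - 1 : ℕ) : ℝ) = (d : ℝ) - 1 := by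
    push_cast [Nat.cast_sub hd]
    ring
  simp [this, polyGrad, Pi.smul_apply]

lemma hess_quad (hd : 1 ≤ d) (hf : f.IsHomogeneous d) :
    a ⬝ᵥ (polyHess f a *ᵥ a) = (d : ℝ) * ((d : ℝ) - 1) * eval a f := by
  rw [hess_mulVec hd hf, dotProduct_smul, smul_eq_mul, grad_euler hf]
  ring

lemma dot_q (hd : 1 ≤ d) (hf : f.IsHomogeneous d) (x : Fin n → ℝ) :
    x ⬝ᵥ (polyHess f a *ᵥ a) = ((d : ℝ) - 1) * (x ⬝ᵥ polyGrad f a) := by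
  rw [hess_mulVec hd hf, dotProduct_smul, smul_eq_mul]

section Point
variable (hd2 : 2 ≤ d) (hf : f.IsHomogeneous d) (hF : 0 < eval a f)

-- abbreviations are unfolded manually in each lemma

lemma t_pos (hd2 : 2 ≤ d) (hf : f.IsHomogeneous d) (hF : 0 < eval a f) :
    0 < a ⬝ᵥ (polyHess f a *ᵥ a) := by
  rw [hess_quad (by omega) hf]
  have h2 : (2:ℝ) ≤ (d:ℝ) := by exact_mod_cast hd2
  exact mul_pos (mul_pos (by linarith) (by linarith)) hF

lemma Pc_to_Pd (hd2 : 2 ≤ d) (hf : f.IsHomogeneous d) (hF : 0 < eval a f)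
    (hc : ∀ x, x ⬝ᵥ (polyHess f a *ᵥ a) = 0 → x ⬝ᵥ (polyHess f a *ᵥ x) ≤ 0) :
    ∀ x, (a ⬝ᵥ (polyHess f a *ᵥ a)) * (x ⬝ᵥ (polyHess f a *ᵥ x))
      ≤ (x ⬝ᵥ (polyHess f a *ᵥ a))^2 := by
  intro x
  set Q := polyHess f a with hQdef
  set t := a ⬝ᵥ (Q *ᵥ a) with htdef
  have ht : 0 < t := t_pos hd2 hf hF
  set s : ℝ := (x ⬝ᵥ (Q *ᵥ a)) / t with hsdef
  set y : Fin n → ℝ := x - s • a with hydef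
  have hyq : y ⬝ᵥ (Q *ᵥ a) = 0 := by
    rw [hydef, sub_dotProduct, smul_dotProduct, smul_eq_mul, hsdef]
    field_simp
    simp [htdef]
  have hsymm : a ⬝ᵥ (Q *ᵥ y) = y ⬝ᵥ (Q *ᵥ a) := dot_symm (polyHess_herm f a) a y
  have hx : x = y + s • a := by rw [hydef, sub_add_cancel]
  have hexp : x ⬝ᵥ (Q *ᵥ x) = y ⬝ᵥ (Q *ᵥ y) + s^2 * t := by
    rw [hx]
    rw [mulVec_add, mulVec_smul, dotProduct_add, add_dotProduct, add_dotProduct,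
      dotProduct_smul, dotProduct_smul, smul_dotProduct, smul_dotProduct]
    simp only [smul_eq_mul]
    rw [hsymm, hyq]
    rw [← htdef]
    ring
  have hyy := hc y hyq
  have hst : s * t = x ⬝ᵥ (Q *ᵥ a) := by
    rw [hsdef]; field_simp
  have : t * (x ⬝ᵥ (Q *ᵥ x)) = t * (y ⬝ᵥ (Q *ᵥ y)) + (s*t)^2 := by
    rw [hexp]; ring
  rw [this, hst]
  nlinarith

lemma Pd_to_Pc (hd2 : 2 ≤ d) (hf : f.IsHomogeneous d) (hF : 0 < eval a f)
    (hdq : ∀ x, (a ⬝ᵥ (polyHess f a *ᵥ a)) * (x ⬝ᵥ (polyHess f a *ᵥ x))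
      ≤ (x ⬝ᵥ (polyHess f a *ᵥ a))^2) :
    ∀ x, x ⬝ᵥ (polyHess f a *ᵥ a) = 0 → x ⬝ᵥ (polyHess f a *ᵥ x) ≤ 0 := by
  intro x hx
  have h := hdq x
  rw [hx] at h
  have ht := t_pos hd2 hf hF
  nlinarith

lemma Pa_iff_Pc (hd2 : 2 ≤ d) (hf : f.IsHomogeneous d) (hF : 0 < eval a f) :
    (∀ x, (eval a f) * (x ⬝ᵥ (polyHess f a *ᵥ x)) ≤ (x ⬝ᵥ polyGrad f a)^2) ↔
    (∀ x, x ⬝ᵥ (polyHess f a *ᵥ a) = 0 → x ⬝ᵥ (polyHess f a *ᵥ x) ≤ 0) := by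
  have hd1 : 1 ≤ d := by omega
  have hdR : (2:ℝ) ≤ (d:ℝ) := by exact_mod_cast hd2
  constructor
  · intro hPa x hx
    have hg : x ⬝ᵥ polyGrad f a = 0 := by
      have := dot_q (a := a) hd1 hf x
      rw [hx] at this
      have hne : (d:ℝ) - 1 ≠ 0 := by linarith
      field_simp at this
      rcases mul_eq_zero.mp this.symm with h | h
      · exact absurd h hne
      · exact h
    have := hPa x
    rw [hg] at this
    nlinarith
  · intro hPc x
    have hPd := Pc_to_Pd hd2 hf hF hPc x
    rw [hess_quad hd1 hf, dot_q hd1 hf x] at hPd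
    set G := x ⬝ᵥ polyGrad f a
    set E := x ⬝ᵥ (polyHess f a *ᵥ x)
    set F := eval a f
    -- hPd : d * (d-1) * F * E ≤ ((d-1) * G)^2
    rcases le_or_gt E 0 with hE | hE
    · nlinarith [sq_nonneg G]
    · have h3 : ((d:ℝ)-1)^2 * G^2 ≤ (d:ℝ)*((d:ℝ)-1) * G^2 := by nlinarith [sq_nonneg G]
      have h4 : (d:ℝ)*((d:ℝ)-1) * (F * E) ≤ (d:ℝ)*((d:ℝ)-1) * G^2 := by nlinarith
      have h5 : 0 < (d:ℝ)*((d:ℝ)-1) := by nlinarith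
      exact le_of_mul_le_mul_left h4 h5

lemma psd_logHess_iff (hF : 0 < eval a f) :
    (-(logHess f a)).PosSemidef ↔
    (∀ x, (eval a f) * (x ⬝ᵥ (polyHess f a *ᵥ x)) ≤ (x ⬝ᵥ polyGrad f a)^2) := by
  have hF2 : (0:ℝ) < (eval a f)^2 := by positivity
  have hquad : ∀ x : Fin n → ℝ, x ⬝ᵥ ((-(logHess f a)) *ᵥ x)
      = ((eval a f)^2)⁻¹ * ((x ⬝ᵥ polyGrad f a)^2
        - (eval a f) * (x ⬝ᵥ (polyHess f a *ᵥ x))) := by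
    intro x
    rw [logHess]
    rw [← smul_neg, neg_sub]
    rw [smul_mulVec, dotProduct_smul, smul_eq_mul]
    congr 1
    rw [sub_mulVec, dotProduct_sub, vmv_mulVec, dotProduct_smul, smul_mulVec,
      dotProduct_smul]
    simp only [smul_eq_mul]
    rw [dotProduct_comm (polyGrad f a) x]
    ring
  constructor
  · intro h x
    have h0 := h.dotProduct_mulVec_nonneg x
    rw [_root_.star_vec, hquad x] at h0
    have hinv : (0:ℝ) < ((eval a f)^2)⁻¹ := by positivity
    by_contra hlt
    push_neg at hlt
    have hneg : ((eval a f)^2)⁻¹ * ((x ⬝ᵥ polyGrad f a)^2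
        - (eval a f) * (x ⬝ᵥ (polyHess f a *ᵥ x))) < 0 :=
      mul_neg_of_pos_of_neg hinv (by linarith)
    linarith
  · intro h
    refine posSemidef_iff_dotProduct_mulVec.mpr ⟨?_, ?_⟩
    · apply herm_of_symm
      intro i j
      have hsym : ∀ i j, polyHess f a i j = polyHess f a j i := fun i j => by
        simp [polyHess, pderiv_comm i j]
      simp only [logHess, Matrix.neg_apply, Matrix.smul_apply, Matrix.sub_apply,
        vecMulVec_apply, hsym i j]
      ring
    · intro x
      rw [_root_.star_vec, hquad x]
      have := h x
      have hinv : (0:ℝ) < ((eval a f)^2)⁻¹ := by positivity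
      nlinarith

lemma psd_d_iff (hd2 : 2 ≤ d) (hf : f.IsHomogeneous d) (hF : 0 < eval a f) :
    (-((a ⬝ᵥ (polyHess f a *ᵥ a)) • polyHess f a -
        vecMulVec (polyHess f a *ᵥ a) (polyHess f a *ᵥ a))).PosSemidef ↔
    (∀ x, (a ⬝ᵥ (polyHess f a *ᵥ a)) * (x ⬝ᵥ (polyHess f a *ᵥ x))
      ≤ (x ⬝ᵥ (polyHess f a *ᵥ a))^2) := by
  have hquad : ∀ x : Fin n → ℝ,
      x ⬝ᵥ ((-((a ⬝ᵥ (polyHess f a *ᵥ a)) • polyHess f a -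
        vecMulVec (polyHess f a *ᵥ a) (polyHess f a *ᵥ a))) *ᵥ x)
      = (x ⬝ᵥ (polyHess f a *ᵥ a))^2
        - (a ⬝ᵥ (polyHess f a *ᵥ a)) * (x ⬝ᵥ (polyHess f a *ᵥ x)) := by
    intro x
    rw [neg_mulVec, dotProduct_neg, sub_mulVec, dotProduct_sub, vmv_mulVec,
      dotProduct_smul, smul_mulVec, dotProduct_smul]
    simp only [smul_eq_mul]
    rw [dotProduct_comm (polyHess f a *ᵥ a) x]
    ring
  constructor
  · intro h x
    have := h.dotProduct_mulVec_nonneg x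
    rw [_root_.star_vec, hquad x] at this
    linarith
  · intro h
    refine posSemidef_iff_dotProduct_mulVec.mpr ⟨?_, ?_⟩
    · apply herm_of_symm
      intro i j
      have hsym : ∀ i j, polyHess f a i j = polyHess f a j i := fun i j => by
        simp [polyHess, pderiv_comm i j]
      simp only [Matrix.neg_apply, Matrix.smul_apply, Matrix.sub_apply, vecMulVec_apply,
        hsym i j]
      ring
    · intro x
      rw [_root_.star_vec, hquad x]
      have := h x
      linarith

end Point

end PolyPoint

end Stmt9Helpers

/-- Equivalent characterizations of log-concavity of a form of degree
`d ≥ 2` on a proper convex cone `K`, assuming `f > 0` on the interior of `K`. -/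
theorem stmt9 {n d : ℕ} (hd : 2 ≤ d) (f : MvPolynomial (Fin n) ℝ)
    (hf : f.IsHomogeneous d) (K : Set (Fin n → ℝ)) (hK : IsProperCone K)
    (hpos : ∀ a ∈ interior K, 0 < eval a f) :
    List.TFAE
      [∀ a ∈ interior K, LogConcaveAt f a,
       ∀ a ∈ interior K, posEigCount (polyHess f a) = 1,
       ∀ a ∈ interior K, ∀ x : Fin n → ℝ,
         x ⬝ᵥ (polyHess f a *ᵥ a) = 0 → x ⬝ᵥ (polyHess f a *ᵥ x) ≤ 0,
       ∀ a ∈ interior K,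
         (-((a ⬝ᵥ (polyHess f a *ᵥ a)) • polyHess f a -
            vecMulVec (polyHess f a *ᵥ a) (polyHess f a *ᵥ a))).PosSemidef] := by
  
  obtain ⟨-, -, -, -, ⟨a0, ha0⟩⟩ := hK
  have hfne : f ≠ 0 := by
    intro h
    have := hpos a0 ha0
    rw [h, map_zero] at this
    exact lt_irrefl 0 this
  tfae_have 1 ↔ 3 := by
    constructor
    · intro h a ha
      rcases h a ha with h0 | ⟨hFa, hpsd⟩
      · exact absurd h0 hfne
      · exact (Pa_iff_Pc hd hf (hpos a ha)).mp ((psd_logHess_iff (hpos a ha)).mp hpsd)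
    · intro h a ha
      exact Or.inr ⟨hpos a ha,
        (psd_logHess_iff (hpos a ha)).mpr ((Pa_iff_Pc hd hf (hpos a ha)).mpr (h a ha))⟩
  tfae_have 2 ↔ 3 := by
    constructor
    · intro h a ha
      exact nsd_on_perp (polyHess_herm f a) (t_pos hd hf (hpos a ha)) (h a ha)
    · intro h a ha
      exact posEig_of_lorentz (polyHess_herm f a) (t_pos hd hf (hpos a ha)) (h a ha)
  tfae_have 4 ↔ 3 := by
    constructor
    · intro h a ha
      exact Pd_to_Pc hd hf (hpos a ha) ((psd_d_iff hd hf (hpos a ha)).mp (h a ha))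
    · intro h a ha
      exact (psd_d_iff hd hf (hpos a ha)).mpr (Pc_to_Pd hd hf (hpos a ha) (h a ha))
  tfae_finish
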